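/- Let p be a prime, k an even integer with k > 4, χ ∈ {-1,0,1}, and a ≤ b, a' ≤ b' nonnegative integers with a' ≤ a and b' < b. With F(a,b) = ∑_{ℓ=0}^{a} p^{ℓ(k-1)} ( ∑_{w=0}^{b-ℓ} p^{w(2k-3)} - χ p^{k-2} ∑_{w=0}^{b-ℓ-1} p^{w(2k-3)} ), one has F(a', b') < F(a, b). -/

import Mathlib

open scoped BigOperators

/-- The local Siegel series `F_p(T, 3-k)` evaluated combinatorially:
`F(a,b,χ) = ∑_{ℓ=0}^{a} p^{ℓ(k-1)} ( ∑_{w=0}^{b-ℓ} p^{w(2k-3)} - χ p^{k-2} ∑_{w=0}^{b-ℓ-1} p^{w(2k-3)} )`,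
where sums with negative upper index are zero. -/
def siegelF (p k a b : ℕ) (χ : ℤ) : ℤ :=
  ∑ ℓ ∈ Finset.range (a + 1),
    if ℓ ≤ b then
      (p : ℤ) ^ (ℓ * (k - 1)) *
        ((∑ w ∈ Finset.range (b - ℓ + 1), (p : ℤ) ^ (w * (2 * k - 3))) -
          χ * (p : ℤ) ^ (k - 2) * ∑ w ∈ Finset.range (b - ℓ), (p : ℤ) ^ (w * (2 * k - 3)))
    else 0

namespace SiegelAux

/-- Geometric-type sum. -/
def S (p k n : ℕ) : ℤ := ∑ w ∈ Finset.range n, (p : ℤ) ^ (w * (2 * k - 3))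

/-- The inner factor. -/
def g (p k : ℕ) (χ : ℤ) (n : ℕ) : ℤ :=
  S p k (n + 1) - χ * (p : ℤ) ^ (k - 2) * S p k n

lemma g_strictMono (p k : ℕ) (hp : 2 ≤ p) (hk : 5 ≤ k) (χ : ℤ) (hχ : χ ≤ 1) :
    StrictMono (g p k χ) := by
  apply strictMono_nat_of_lt_succ
  intro n
  have hp1 : (1 : ℤ) < (p : ℤ) := by exact_mod_cast hp
  have hp0 : (0 : ℤ) < (p : ℤ) := by linarith
  have hSsucc : ∀ m, S p k (m + 1) = S p k m + (p : ℤ) ^ (m * (2 * k - 3)) := by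
    intro m; simp [S, Finset.sum_range_succ]
  have key : χ * (p : ℤ) ^ (k - 2) * (p : ℤ) ^ (n * (2 * k - 3))
      < (p : ℤ) ^ ((n + 1) * (2 * k - 3)) := by
    have h1 : χ * ((p : ℤ) ^ (k - 2) * (p : ℤ) ^ (n * (2 * k - 3)))
        ≤ 1 * ((p : ℤ) ^ (k - 2) * (p : ℤ) ^ (n * (2 * k - 3))) := by
      apply mul_le_mul_of_nonneg_right hχ
      positivity
    have h2 : (p : ℤ) ^ (k - 2) * (p : ℤ) ^ (n * (2 * k - 3))
        = (p : ℤ) ^ ((k - 2) + n * (2 * k - 3)) := (pow_add _ _ _).symm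
    have h3 : (p : ℤ) ^ ((k - 2) + n * (2 * k - 3)) < (p : ℤ) ^ ((n + 1) * (2 * k - 3)) := by
      apply pow_lt_pow_right₀ hp1
      have : 2 * k - 3 = (2 * k - 3) := rfl
      nlinarith [Nat.sub_add_cancel (show 3 ≤ 2 * k by omega),
        Nat.sub_add_cancel (show 2 ≤ k by omega)]
    calc χ * (p : ℤ) ^ (k - 2) * (p : ℤ) ^ (n * (2 * k - 3))
        = χ * ((p : ℤ) ^ (k - 2) * (p : ℤ) ^ (n * (2 * k - 3))) := by ring
      _ ≤ 1 * ((p : ℤ) ^ (k - 2) * (p : ℤ) ^ (n * (2 * k - 3))) := h1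
      _ = (p : ℤ) ^ ((k - 2) + n * (2 * k - 3)) := by rw [one_mul, h2]
      _ < (p : ℤ) ^ ((n + 1) * (2 * k - 3)) := h3
  have e1 := hSsucc (n + 1)
  have e2 := hSsucc n
  simp only [g]
  rw [e1, e2]
  nlinarith [key]

lemma g_pos (p k : ℕ) (hp : 2 ≤ p) (hk : 5 ≤ k) (χ : ℤ) (hχ : χ ≤ 1) (n : ℕ) :
    0 < g p k χ n := by
  have h0 : g p k χ 0 = 1 := by simp [g, S]
  have := (g_strictMono p k hp hk χ hχ).monotone (Nat.zero_le n)
  omega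

lemma siegelF_eq (p k a b : ℕ) (χ : ℤ) (hab : a ≤ b) :
    siegelF p k a b χ
      = ∑ ℓ ∈ Finset.range (a + 1), (p : ℤ) ^ (ℓ * (k - 1)) * g p k χ (b - ℓ) := by
  apply Finset.sum_congr rfl
  intro ℓ hℓ
  rw [Finset.mem_range] at hℓ
  have hℓb : ℓ ≤ b := by omega
  simp [hℓb, g, S]

end SiegelAux

/-- Strict monotonicity of the local Siegel series value: if `a' ≤ a`, `b' < b`,
`a' ≤ b'` and `a ≤ b`, then `F(a',b',χ) < F(a,b,χ)`. -/
theorem stmt6 (p k : ℕ) (hp : p.Prime) (hk : Even k) (hk4 : 4 < k)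
    (a b a' b' : ℕ) (hab : a ≤ b) (hab' : a' ≤ b') (ha : a' ≤ a) (hb : b' < b)
    (χ : ℤ) (hχ : χ = -1 ∨ χ = 0 ∨ χ = 1) :
    siegelF p k a' b' χ < siegelF p k a b χ := by
  have hp2 : 2 ≤ p := hp.two_le
  have hk5 : 5 ≤ k := by omega
  have hχ1 : χ ≤ 1 := by rcases hχ with h | h | h <;> simp [h]
  rw [SiegelAux.siegelF_eq p k a' b' χ hab', SiegelAux.siegelF_eq p k a b χ hab]
  have hpow : ∀ ℓ : ℕ, (0 : ℤ) < (p : ℤ) ^ (ℓ * (k - 1)) := by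
    intro ℓ
    have : (0 : ℤ) < (p : ℤ) := by exact_mod_cast hp.pos
    positivity
  calc ∑ ℓ ∈ Finset.range (a' + 1), (p : ℤ) ^ (ℓ * (k - 1)) * SiegelAux.g p k χ (b' - ℓ)
      < ∑ ℓ ∈ Finset.range (a' + 1), (p : ℤ) ^ (ℓ * (k - 1)) * SiegelAux.g p k χ (b - ℓ) := by
        apply Finset.sum_lt_sum_of_nonempty Finset.nonempty_range_add_one
        intro ℓ hℓ
        rw [Finset.mem_range] at hℓ
        apply mul_lt_mul_of_pos_left _ (hpow ℓ)
        exact SiegelAux.g_strictMono p k hp2 hk5 χ hχ1 (by omega)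
    _ ≤ ∑ ℓ ∈ Finset.range (a + 1), (p : ℤ) ^ (ℓ * (k - 1)) * SiegelAux.g p k χ (b - ℓ) := by
        apply Finset.sum_le_sum_of_subset_of_nonneg
        · exact Finset.range_subset_range.mpr (by omega)
        · intro ℓ _ _
          exact le_of_lt (mul_pos (hpow ℓ) (SiegelAux.g_pos p k hp2 hk5 χ hχ1 _))
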